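/- Let 0 < P_fa < 1/2, P_fa < P_d < 1, α ∈ (0,1], and β'_{1,0}, β'_{0,1} ≥ 0 with β'_{1,0} + α < 1/2 and β'_{0,1} + α < 1/2. For p ∈ [0,1] set π_{1,1}(p) = (β'_{1,0}+αp)(1−P_d) + (1−β'_{0,1}−αp)P_d and π_{1,0}(p) = (β'_{1,0}+αp)(1−P_fa) + (1−β'_{0,1}−αp)P_fa. Then D_k(p) = π_{1,0}(p) log(π_{1,0}(p)/π_{1,1}(p)) + (1−π_{1,0}(p)) log((1−π_{1,0}(p))/(1−π_{1,1}(p))) is strictly decreasing in p on [0,1]; consequently, in the region where the attacker cannot make D_k = 0, the optimal attacking strategy is the symmetric strategy with (P_{0,1}^k, P_{1,0}^k) = (1,1). -/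

import Mathlib

/-- Probability of receiving a 1, given aggregate flipping probabilities
`β₁₀`, `β₀₁` and local decision probability `P`. -/
noncomputable def piProb (β10 β01 P : ℝ) : ℝ := β10 * (1 - P) + (1 - β01) * P

/-- Bernoulli Kullback–Leibler divergence between success probabilities `a` and `b`. -/
noncomputable def klBern (a b : ℝ) : ℝ :=
  a * Real.log (a / b) + (1 - a) * Real.log ((1 - a) / (1 - b))

/-- Key inequality: the derivative expression of the Bernoulli KL divergence is
negative when `0 < a < b < 1`, `s > 0`, and `t (1-a) ≤ s (1-b)`. -/
lemma E_neg (a b s t : ℝ) (ha : 0 < a) (hab : a < b) (hb1 : b < 1)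
    (hs : 0 < s) (hts : t * (1 - a) ≤ s * (1 - b)) :
    s * ((Real.log a - Real.log b) - (Real.log (1 - a) - Real.log (1 - b))) +
      t * ((b - a) / (b * (1 - b))) < 0 := by
  have hb : 0 < b := ha.trans hab
  have h1a : 0 < 1 - a := by linarith
  have h1b : 0 < 1 - b := by linarith
  have hx : 0 < a * (1 - b) / (b * (1 - a)) := by positivity
  have hxlt : a * (1 - b) / (b * (1 - a)) < 1 := by
    rw [div_lt_one (by positivity)]
    nlinarith
  have hlog := Real.log_lt_sub_one_of_pos hx (ne_of_lt hxlt)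
  have hsplit : Real.log (a * (1 - b) / (b * (1 - a))) =
      (Real.log a - Real.log b) - (Real.log (1 - a) - Real.log (1 - b)) := by
    rw [Real.log_div (by positivity) (by positivity), Real.log_mul ha.ne' h1b.ne',
      Real.log_mul hb.ne' h1a.ne']
    ring
  have hfrac : a * (1 - b) / (b * (1 - a)) - 1 = (a - b) / (b * (1 - a)) := by
    field_simp
    ring
  have hX : (Real.log a - Real.log b) - (Real.log (1 - a) - Real.log (1 - b)) <
      (a - b) / (b * (1 - a)) := by
    rw [← hsplit, ← hfrac]; exact hlog
  have h1 : s * ((Real.log a - Real.log b) - (Real.log (1 - a) - Real.log (1 - b))) <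
      s * ((a - b) / (b * (1 - a))) := mul_lt_mul_of_pos_left hX hs
  have h2 : s * ((a - b) / (b * (1 - a))) + t * ((b - a) / (b * (1 - b))) ≤ 0 := by
    have heq : s * ((a - b) / (b * (1 - a))) + t * ((b - a) / (b * (1 - b))) =
        ((b - a) * (t * (1 - a) - s * (1 - b))) / (b * (1 - a) * (1 - b)) := by
      field_simp
      ring
    rw [heq]
    apply div_nonpos_of_nonpos_of_nonneg
    · exact mul_nonpos_of_nonneg_of_nonpos (by linarith) (by linarith)
    · positivity
  linarith

/-- Generic strict antitonicity of `p ↦ klBern (A p) (B p)` for affine `A`, `B`. -/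
lemma klBern_strictAntiOn (A B : ℝ → ℝ) (s t : ℝ)
    (hA : ∀ p : ℝ, HasDerivAt A s p) (hB : ∀ p : ℝ, HasDerivAt B t p)
    (hs : 0 < s)
    (hfacts : ∀ p ∈ Set.Icc (0:ℝ) 1, 0 < A p ∧ A p < B p ∧ B p < 1)
    (hts : ∀ p ∈ Set.Icc (0:ℝ) 1, t * (1 - A p) ≤ s * (1 - B p)) :
    StrictAntiOn (fun p => klBern (A p) (B p)) (Set.Icc 0 1) := by
  have hDF : ∀ p ∈ Set.Icc (0:ℝ) 1,
      HasDerivAt (fun q => A q * (Real.log (A q) - Real.log (B q)) +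
          (1 - A q) * (Real.log (1 - A q) - Real.log (1 - B q)))
        (s * (Real.log (A p) - Real.log (B p)) + A p * (s / A p - t / B p) +
          (-s * (Real.log (1 - A p) - Real.log (1 - B p)) +
            (1 - A p) * (-s / (1 - A p) - -t / (1 - B p)))) p := by
    intro p hp
    obtain ⟨ha, hab, hb1⟩ := hfacts p hp
    have hb0 : 0 < B p := ha.trans hab
    have h1a : (0:ℝ) < 1 - A p := by linarith
    have h1b : (0:ℝ) < 1 - B p := by linarith
    have hlA : HasDerivAt (fun q => Real.log (A q)) (s / A p) p := (hA p).log ha.ne'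
    have hlB : HasDerivAt (fun q => Real.log (B q)) (t / B p) p := (hB p).log hb0.ne'
    have h1A : HasDerivAt (fun q => 1 - A q) (-s) p := (hA p).const_sub 1
    have h1B : HasDerivAt (fun q => 1 - B q) (-t) p := (hB p).const_sub 1
    have hl1A : HasDerivAt (fun q => Real.log (1 - A q)) (-s / (1 - A p)) p :=
      h1A.log h1a.ne'
    have hl1B : HasDerivAt (fun q => Real.log (1 - B q)) (-t / (1 - B p)) p :=
      h1B.log h1b.ne'
    exact ((hA p).mul (hlA.sub hlB)).add (h1A.mul (hl1A.sub hl1B))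
  have hFanti : StrictAntiOn (fun q => A q * (Real.log (A q) - Real.log (B q)) +
      (1 - A q) * (Real.log (1 - A q) - Real.log (1 - B q))) (Set.Icc 0 1) := by
    apply strictAntiOn_of_deriv_neg (convex_Icc 0 1)
    · intro p hp
      exact ((hDF p hp).continuousAt).continuousWithinAt
    · intro p hp
      rw [interior_Icc] at hp
      have hpI : p ∈ Set.Icc (0:ℝ) 1 := ⟨le_of_lt hp.1, le_of_lt hp.2⟩
      obtain ⟨ha, hab, hb1⟩ := hfacts p hpI
      have hb0 : 0 < B p := ha.trans hab
      have h1a : (0:ℝ) < 1 - A p := by linarith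
      have h1b : (0:ℝ) < 1 - B p := by linarith
      rw [(hDF p hpI).deriv]
      have hE : s * (Real.log (A p) - Real.log (B p)) + A p * (s / A p - t / B p) +
          (-s * (Real.log (1 - A p) - Real.log (1 - B p)) +
            (1 - A p) * (-s / (1 - A p) - -t / (1 - B p))) =
          s * ((Real.log (A p) - Real.log (B p)) -
              (Real.log (1 - A p) - Real.log (1 - B p))) +
            t * ((B p - A p) / (B p * (1 - B p))) := by
        field_simp
        ring
      rw [hE]
      exact E_neg (A p) (B p) s t ha hab hb1 hs (hts p hpI)
  intro x hx y hy hxy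
  obtain ⟨hax, habx, hb1x⟩ := hfacts x hx
  obtain ⟨hay, haby, hb1y⟩ := hfacts y hy
  have hbx : 0 < B x := hax.trans habx
  have hby : 0 < B y := hay.trans haby
  have := hFanti hx hy hxy
  simp only [klBern]
  rw [Real.log_div hax.ne' hbx.ne', Real.log_div (by linarith : (0:ℝ) < 1 - A x).ne'
      (by linarith : (0:ℝ) < 1 - B x).ne',
    Real.log_div hay.ne' hby.ne', Real.log_div (by linarith : (0:ℝ) < 1 - A y).ne'
      (by linarith : (0:ℝ) < 1 - B y).ne']
  exact this

/-- Under symmetric flipping probabilities `P₁₀ᵏ = P₀₁ᵏ = p`, the level-`k` KL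
divergence `D_k(p)` is strictly decreasing in `p` on `[0,1]`; consequently, in the
region where the attacker cannot make `D_k = 0`, the optimal attacking strategy is
`(P₀₁ᵏ, P₁₀ᵏ) = (1,1)`. -/
theorem stmt_9 (Pfa Pd α β10' β01' : ℝ)
    (hPfa : 0 < Pfa) (hPfa2 : Pfa < 1 / 2) (hPfaPd : Pfa < Pd) (hPd : Pd < 1)
    (hα : α ∈ Set.Ioc (0 : ℝ) 1)
    (hβ10' : 0 ≤ β10') (hβ01' : 0 ≤ β01')
    (h10 : β10' + α < 1 / 2) (h01 : β01' + α < 1 / 2) :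
    StrictAntiOn
      (fun p : ℝ =>
        klBern (piProb (β10' + α * p) (β01' + α * p) Pfa)
               (piProb (β10' + α * p) (β01' + α * p) Pd))
      (Set.Icc 0 1) ∧
    ∀ p ∈ Set.Icc (0 : ℝ) 1,
      klBern (piProb (β10' + α * 1) (β01' + α * 1) Pfa)
             (piProb (β10' + α * 1) (β01' + α * 1) Pd) ≤
        klBern (piProb (β10' + α * p) (β01' + α * p) Pfa)
               (piProb (β10' + α * p) (β01' + α * p) Pd) := by
  obtain ⟨hα0, hα1⟩ := hα
  have hderivA : ∀ (P : ℝ) (p : ℝ),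
      HasDerivAt (fun q : ℝ => piProb (β10' + α * q) (β01' + α * q) P)
        (α * (1 - 2 * P)) p := by
    intro P p
    have h1 : HasDerivAt (fun q : ℝ => β10' + α * q) α p := by
      simpa using ((hasDerivAt_id p).const_mul α).const_add β10'
    have h2 : HasDerivAt (fun q : ℝ => 1 - (β01' + α * q)) (-α) p := by
      have := (((hasDerivAt_id p).const_mul α).const_add β01').const_sub 1
      simpa using this
    have h := (h1.mul_const (1 - P)).add (h2.mul_const P)
    have hgoal : HasDerivAt
        (fun q : ℝ => (β10' + α * q) * (1 - P) + (1 - (β01' + α * q)) * P)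
        (α * (1 - 2 * P)) p := by
      exact h.congr_deriv (by ring)
    exact hgoal
  have hfacts : ∀ p ∈ Set.Icc (0:ℝ) 1,
      0 < piProb (β10' + α * p) (β01' + α * p) Pfa ∧
      piProb (β10' + α * p) (β01' + α * p) Pfa <
        piProb (β10' + α * p) (β01' + α * p) Pd ∧
      piProb (β10' + α * p) (β01' + α * p) Pd < 1 := by
    intro p hp
    obtain ⟨hp0, hp1⟩ := hp
    have hαp0 : 0 ≤ α * p := mul_nonneg hα0.le hp0
    have hαp1 : α * p ≤ α := by nlinarith
    simp only [piProb]
    refine ⟨?_, ?_, ?_⟩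
    · nlinarith [mul_nonneg (by linarith : (0:ℝ) ≤ β10' + α * p)
        (by linarith : (0:ℝ) ≤ 1 - Pfa),
        mul_pos (by linarith : (0:ℝ) < 1 - (β01' + α * p)) hPfa]
    · nlinarith [mul_pos (by linarith : (0:ℝ) < Pd - Pfa)
        (by linarith : (0:ℝ) < 1 - (β10' + α * p) - (β01' + α * p))]
    · nlinarith [mul_pos (by linarith : (0:ℝ) < 1 - (β10' + α * p) - (β01' + α * p))
        (by linarith : (0:ℝ) < 1 - Pd)]
  have hts : ∀ p ∈ Set.Icc (0:ℝ) 1,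
      α * (1 - 2 * Pd) * (1 - piProb (β10' + α * p) (β01' + α * p) Pfa) ≤
      α * (1 - 2 * Pfa) * (1 - piProb (β10' + α * p) (β01' + α * p) Pd) := by
    intro p _
    have hkey : α * (1 - 2 * Pfa) * (1 - piProb (β10' + α * p) (β01' + α * p) Pd) -
        α * (1 - 2 * Pd) * (1 - piProb (β10' + α * p) (β01' + α * p) Pfa) =
        α * ((Pd - Pfa) * (1 - β10' + β01')) := by
      simp only [piProb]
      ring
    nlinarith [mul_pos hα0 (mul_pos (by linarith : (0:ℝ) < Pd - Pfa)
      (by linarith : (0:ℝ) < 1 - β10' + β01'))]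
  have hanti : StrictAntiOn
      (fun p : ℝ =>
        klBern (piProb (β10' + α * p) (β01' + α * p) Pfa)
               (piProb (β10' + α * p) (β01' + α * p) Pd))
      (Set.Icc 0 1) :=
    klBern_strictAntiOn _ _ (α * (1 - 2 * Pfa)) (α * (1 - 2 * Pd))
      (hderivA Pfa) (hderivA Pd)
      (by nlinarith) hfacts hts
  refine ⟨hanti, ?_⟩
  intro p hp
  rcases eq_or_lt_of_le hp.2 with h | h
  · rw [h]
  · exact le_of_lt (hanti hp ⟨zero_le_one, le_refl 1⟩ h)
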